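/- Let F : [0,1] → [0,1] be continuous with F(μ) > μ for μ < μ_∞ and F(μ) < μ for μ > μ_∞, F monotone nondecreasing, and let two sequences evolve by μ^{(0)}_{t+1} = F(μ^{(0)}_t) and μ^{(1)}_{t+1} = F(μ^{(1)}_t) from arbitrary initial points μ^{(0)}_0, μ^{(1)}_0 ∈ [0,1]. Then |μ^{(0)}_t − μ^{(1)}_t| → 0 as t → ∞. -/
import Mathlib


open MeasureTheory Set Filter

noncomputable def betaFun (a b : ℝ) : ℝ :=
  ∫ t in (0:ℝ)..1, t ^ (a - 1) * (1 - t) ^ (b - 1)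

noncomputable def regIncBeta (x a b : ℝ) : ℝ :=
  (∫ t in (0:ℝ)..x, t ^ (a - 1) * (1 - t) ^ (b - 1)) / betaFun a b

noncomputable def betaDens (μ c x : ℝ) : ℝ :=
  x ^ (c * μ - 1) * (1 - x) ^ (c * (1 - μ) - 1) / betaFun (c * μ) (c * (1 - μ))


lemma converge_le_aux (F : ℝ → ℝ) (μlim : ℝ)
    (hmaps : Set.MapsTo F (Set.Icc 0 1) (Set.Icc 0 1))
    (hcont : ContinuousOn F (Set.Icc 0 1))
    (hμlim : μlim ∈ Set.Ioo (0:ℝ) 1) (hfix : F μlim = μlim)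
    (hlt : ∀ μ ∈ Set.Icc (0:ℝ) 1, μ < μlim → μ < F μ)
    (hmono : MonotoneOn F (Set.Icc 0 1))
    (μ : ℕ → ℝ) (hinit : μ 0 ∈ Set.Icc (0:ℝ) 1) (hle : μ 0 ≤ μlim)
    (hrec : ∀ t, μ (t + 1) = F (μ t)) :
    Filter.Tendsto μ Filter.atTop (nhds μlim) := by
  have hμlimIcc : μlim ∈ Set.Icc (0:ℝ) 1 := ⟨hμlim.1.le, hμlim.2.le⟩
  have hIcc : ∀ t, μ t ∈ Set.Icc (0:ℝ) 1 := by
    intro t; induction t with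
    | zero => exact hinit
    | succ n ih => rw [hrec]; exact hmaps ih
  have hbd : ∀ t, μ t ≤ μlim := by
    intro t; induction t with
    | zero => exact hle
    | succ n ih =>
      rw [hrec]; calc F (μ n) ≤ F μlim := hmono (hIcc n) hμlimIcc ih
        _ = μlim := hfix
  have hmonoμ : Monotone μ := by
    apply monotone_nat_of_le_succ
    intro t
    rcases lt_or_eq_of_le (hbd t) with h | h
    · rw [hrec]; exact (hlt _ (hIcc t) h).le
    · rw [hrec, h, hfix]
  have hbdd : BddAbove (Set.range μ) := ⟨μlim, by rintro x ⟨t, rfl⟩; exact hbd t⟩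
  have htend := tendsto_atTop_ciSup hmonoμ hbdd
  set L := ⨆ t, μ t with hL
  have hLle : L ≤ μlim := ciSup_le hbd
  have hLIcc : L ∈ Set.Icc (0:ℝ) 1 :=
    ⟨(hIcc 0).1.trans (le_ciSup hbdd 0), hLle.trans hμlim.2.le⟩
  have hFL : Filter.Tendsto (fun t => F (μ t)) Filter.atTop (nhds (F L)) := by
    have h1 : Filter.Tendsto μ Filter.atTop (nhdsWithin L (Set.Icc 0 1)) :=
      tendsto_nhdsWithin_of_tendsto_nhds_of_eventually_within _ htend
        (Filter.Eventually.of_forall hIcc)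
    exact (hcont L hLIcc).tendsto.comp h1
  have hshift : Filter.Tendsto (fun t => μ (t + 1)) Filter.atTop (nhds L) :=
    htend.comp (tendsto_add_atTop_nat 1)
  have hfixL : F L = L := by
    refine tendsto_nhds_unique hFL ?_
    simpa [hrec] using hshift
  have : L = μlim := by
    rcases lt_or_eq_of_le hLle with h | h
    · have h2 := hlt _ hLIcc h; rw [hfixL] at h2; exact absurd h2 (lt_irrefl L)
    · exact h
  rwa [this] at htend

lemma converge_ge_aux (F : ℝ → ℝ) (μlim : ℝ)
    (hmaps : Set.MapsTo F (Set.Icc 0 1) (Set.Icc 0 1))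
    (hcont : ContinuousOn F (Set.Icc 0 1))
    (hμlim : μlim ∈ Set.Ioo (0:ℝ) 1) (hfix : F μlim = μlim)
    (hgt : ∀ μ ∈ Set.Icc (0:ℝ) 1, μlim < μ → F μ < μ)
    (hmono : MonotoneOn F (Set.Icc 0 1))
    (μ : ℕ → ℝ) (hinit : μ 0 ∈ Set.Icc (0:ℝ) 1) (hge : μlim ≤ μ 0)
    (hrec : ∀ t, μ (t + 1) = F (μ t)) :
    Filter.Tendsto μ Filter.atTop (nhds μlim) := by
  have hμlimIcc : μlim ∈ Set.Icc (0:ℝ) 1 := ⟨hμlim.1.le, hμlim.2.le⟩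
  have hIcc : ∀ t, μ t ∈ Set.Icc (0:ℝ) 1 := by
    intro t; induction t with
    | zero => exact hinit
    | succ n ih => rw [hrec]; exact hmaps ih
  have hbd : ∀ t, μlim ≤ μ t := by
    intro t; induction t with
    | zero => exact hge
    | succ n ih =>
      rw [hrec]; calc μlim = F μlim := hfix.symm
        _ ≤ F (μ n) := hmono hμlimIcc (hIcc n) ih
  have hmonoμ : Antitone μ := by
    apply antitone_nat_of_succ_le
    intro t
    rcases lt_or_eq_of_le (hbd t) with h | h
    · rw [hrec]; exact (hgt _ (hIcc t) h).le
    · rw [hrec, ← h, hfix]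
  have hbdd : BddBelow (Set.range μ) := ⟨μlim, by rintro x ⟨t, rfl⟩; exact hbd t⟩
  have htend := tendsto_atTop_ciInf hmonoμ hbdd
  set L := ⨅ t, μ t with hL
  have hLge : μlim ≤ L := le_ciInf hbd
  have hLIcc : L ∈ Set.Icc (0:ℝ) 1 :=
    ⟨hμlim.1.le.trans hLge, (ciInf_le hbdd 0).trans (hIcc 0).2⟩
  have hFL : Filter.Tendsto (fun t => F (μ t)) Filter.atTop (nhds (F L)) := by
    have h1 : Filter.Tendsto μ Filter.atTop (nhdsWithin L (Set.Icc 0 1)) :=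
      tendsto_nhdsWithin_of_tendsto_nhds_of_eventually_within _ htend
        (Filter.Eventually.of_forall hIcc)
    exact (hcont L hLIcc).tendsto.comp h1
  have hshift : Filter.Tendsto (fun t => μ (t + 1)) Filter.atTop (nhds L) :=
    htend.comp (tendsto_add_atTop_nat 1)
  have hfixL : F L = L := by
    refine tendsto_nhds_unique hFL ?_
    simpa [hrec] using hshift
  have : L = μlim := by
    rcases lt_or_eq_of_le hLge with h | h
    · have h2 := hgt _ hLIcc h; rw [hfixL] at h2; exact absurd h2 (lt_irrefl L)
    · exact h.symm
  rwa [this] at htend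

theorem stmt12 (F : ℝ → ℝ) (μlim : ℝ)
    (hmaps : Set.MapsTo F (Set.Icc 0 1) (Set.Icc 0 1))
    (hcont : ContinuousOn F (Set.Icc 0 1))
    (hμlim : μlim ∈ Set.Ioo (0:ℝ) 1) (hfix : F μlim = μlim)
    (hlt : ∀ μ ∈ Set.Icc (0:ℝ) 1, μ < μlim → μ < F μ)
    (hgt : ∀ μ ∈ Set.Icc (0:ℝ) 1, μlim < μ → F μ < μ)
    (hmono : MonotoneOn F (Set.Icc 0 1))
    (μ0 μ1 : ℕ → ℝ)
    (h0init : μ0 0 ∈ Set.Icc (0:ℝ) 1) (h1init : μ1 0 ∈ Set.Icc (0:ℝ) 1)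
    (h0 : ∀ t, μ0 (t + 1) = F (μ0 t)) (h1 : ∀ t, μ1 (t + 1) = F (μ1 t)) :
    Filter.Tendsto (fun t => |μ0 t - μ1 t|) Filter.atTop (nhds 0) := by
  have key : ∀ (μ : ℕ → ℝ), μ 0 ∈ Set.Icc (0:ℝ) 1 → (∀ t, μ (t + 1) = F (μ t)) →
      Filter.Tendsto μ Filter.atTop (nhds μlim) := by
    intro μ hi hr
    rcases le_total (μ 0) μlim with h | h
    · exact converge_le_aux F μlim hmaps hcont hμlim hfix hlt hmono μ hi h hr
    · exact converge_ge_aux F μlim hmaps hcont hμlim hfix hgt hmono μ hi h hr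
  have := ((key μ0 h0init h0).sub (key μ1 h1init h1)).abs
  simpa using this
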